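/- Let n ≥ 1 and let M be an invertible real n×n matrix. There exists a symmetric positive definite matrix P with (det P)^{−2/n} · M P Mᵀ = P if and only if there exist an invertible real n×n matrix C, a nonzero real number λ, and a real orthogonal matrix U such that C⁻¹ M C = λ U (i.e., M is similar to a nonzero real multiple of an orthogonal matrix). -/

import Mathlib

open Matrix

lemma aux_posDef_mul_transpose {n : ℕ} (C : Matrix (Fin n) (Fin n) ℝ) (hC : IsUnit C) :
    (C * Cᵀ).PosDef := by
  have hCd : IsUnit C.det := (isUnit_iff_isUnit_det C).mp hC
  rw [posDef_iff_dotProduct_mulVec]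
  constructor
  · show (C * Cᵀ)ᴴ = C * Cᵀ
    rw [conjTranspose_eq_transpose_of_trivial, transpose_mul, transpose_transpose]
  · intro x hx
    have hx' : Cᵀ *ᵥ x ≠ 0 := by
      intro h
      apply hx
      have hCtd : IsUnit (Cᵀ).det := by rwa [det_transpose]
      have : (Cᵀ)⁻¹ *ᵥ (Cᵀ *ᵥ x) = x := by
        rw [mulVec_mulVec, nonsing_inv_mul _ hCtd, one_mulVec]
      rw [h, mulVec_zero] at this
      exact this.symm
    have : star x ⬝ᵥ (C * Cᵀ) *ᵥ x = star (Cᵀ *ᵥ x) ⬝ᵥ (Cᵀ *ᵥ x) := by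
      rw [← mulVec_mulVec, dotProduct_mulVec, star_trivial, star_trivial,
        ← mulVec_transpose]
    rw [this]
    exact dotProduct_star_self_pos_iff.mpr hx'

lemma aux_posDef_smul {n : ℕ} {Q : Matrix (Fin n) (Fin n) ℝ} (hQ : Q.PosDef) {t : ℝ}
    (ht : 0 < t) : (t • Q).PosDef := by
  rw [posDef_iff_dotProduct_mulVec]
  constructor
  · show (t • Q)ᴴ = t • Q
    rw [conjTranspose_smul, star_trivial, hQ.1.eq]
  · intro x hx
    rw [smul_mulVec, dotProduct_smul]
    exact mul_pos ht (hQ.dotProduct_mulVec_pos hx)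

open scoped MatrixOrder

theorem stmt_6 (n : ℕ) (hn : 1 ≤ n) (M : Matrix (Fin n) (Fin n) ℝ) (hM : IsUnit M) :
    (∃ P : Matrix (Fin n) (Fin n) ℝ,
        P.PosDef ∧ (P.det ^ (-(2 : ℝ) / n)) • (M * P * Mᵀ) = P) ↔
      (∃ (C : Matrix (Fin n) (Fin n) ℝ) (lam : ℝ) (U : Matrix (Fin n) (Fin n) ℝ),
        IsUnit C ∧ lam ≠ 0 ∧ U * Uᵀ = 1 ∧ C⁻¹ * M * C = lam • U) := by
  have hn' : (n : ℝ) ≠ 0 := Nat.cast_ne_zero.mpr (by omega)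
  constructor
  · rintro ⟨P, hP, heq⟩
    set c : ℝ := P.det ^ (-(2 : ℝ) / n) with hc_def
    have hc : 0 < c := Real.rpow_pos_of_pos hP.det_pos _
    set S : Matrix (Fin n) (Fin n) ℝ := CFC.sqrt P with hS_def
    have hS2 : S * S = P := CFC.sqrt_mul_sqrt_self P hP.posSemidef.nonneg
    have hSsym : Sᵀ = S := by
      rw [← conjTranspose_eq_transpose_of_trivial]
      exact (CFC.sqrt_nonneg P).posSemidef.1
    have hSdet : IsUnit S.det := by
      have h : S.det * S.det = P.det := by rw [← det_mul, hS2]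
      refine isUnit_iff_ne_zero.mpr fun h0 => ?_
      rw [h0, mul_zero] at h
      exact hP.det_pos.ne' h.symm
    have hSu : IsUnit S := (isUnit_iff_isUnit_det S).mpr hSdet
    have hMPMT : M * P * Mᵀ = c⁻¹ • P := by
      have h := congrArg (fun X => c⁻¹ • X) heq
      simpa [smul_smul, inv_mul_cancel₀ hc.ne'] using h
    have hsc : Real.sqrt c ≠ 0 := (Real.sqrt_pos.mpr hc).ne'
    refine ⟨S, (Real.sqrt c)⁻¹, Real.sqrt c • (S⁻¹ * M * S), hSu, inv_ne_zero hsc, ?_, ?_⟩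
    · have hA : (S⁻¹ * M * S) * (S⁻¹ * M * S)ᵀ = c⁻¹ • 1 := by
        rw [transpose_mul, transpose_mul, transpose_nonsing_inv, hSsym]
        calc S⁻¹ * M * S * (S * (Mᵀ * S⁻¹))
            = S⁻¹ * (M * (S * S) * Mᵀ) * S⁻¹ := by
              noncomm_ring
          _ = S⁻¹ * (c⁻¹ • P) * S⁻¹ := by rw [hS2, hMPMT]
          _ = c⁻¹ • (S⁻¹ * (S * S) * S⁻¹) := by
              rw [hS2, Matrix.mul_smul, Matrix.smul_mul]
          _ = c⁻¹ • 1 := by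
              rw [← Matrix.mul_assoc, Matrix.mul_assoc (S⁻¹ * S),
                nonsing_inv_mul _ hSdet, mul_nonsing_inv _ hSdet, one_mul]
      rw [transpose_smul, Matrix.smul_mul, Matrix.mul_smul, hA, smul_smul, smul_smul,
        Real.mul_self_sqrt hc.le, mul_inv_cancel₀ hc.ne', one_smul]
    · rw [smul_smul, inv_mul_cancel₀ hsc, one_smul]
  · rintro ⟨C, lam, U, hC, hlam, hU, hCMC⟩
    have hCd : IsUnit C.det := (isUnit_iff_isUnit_det C).mp hC
    set Q : Matrix (Fin n) (Fin n) ℝ := C * Cᵀ with hQ_def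
    have hQ : Q.PosDef := aux_posDef_mul_transpose C hC
    have hd : 0 < Q.det := hQ.det_pos
    set t : ℝ := |lam| * Q.det ^ (-(1 : ℝ) / n) with ht_def
    have ht : 0 < t := mul_pos (abs_pos.mpr hlam) (Real.rpow_pos_of_pos hd _)
    have hMC : M * C = lam • (C * U) := by
      have h := congrArg (fun X => C * X) hCMC
      simp only [← Matrix.mul_assoc, mul_nonsing_inv _ hCd, one_mul, Matrix.mul_smul] at h
      exact h
    have hMQMT : M * Q * Mᵀ = (lam ^ 2) • Q := by
      calc M * Q * Mᵀ = (M * C) * (M * C)ᵀ := by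
            rw [hQ_def, transpose_mul]; noncomm_ring
        _ = (lam ^ 2) • ((C * U) * (Uᵀ * Cᵀ)) := by
            rw [hMC, transpose_smul, transpose_mul, Matrix.smul_mul, Matrix.mul_smul,
              smul_smul, sq]
        _ = (lam ^ 2) • Q := by
            rw [Matrix.mul_assoc, ← Matrix.mul_assoc U, hU, one_mul, ← hQ_def]
    have key : (t ^ n * Q.det) ^ (-(2 : ℝ) / n) * (t * lam ^ 2) = t := by
      have h1 : (t ^ n * Q.det) ^ (-(2 : ℝ) / n)
          = t ^ (-(2 : ℝ)) * Q.det ^ (-(2 : ℝ) / n) := by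
        have e : (n : ℝ) * (-(2 : ℝ) / n) = -(2 : ℝ) := by field_simp
        rw [Real.mul_rpow (by positivity) hd.le, ← Real.rpow_natCast t n,
          ← Real.rpow_mul ht.le, e]
      have h2 : t ^ 2 = lam ^ 2 * Q.det ^ (-(2 : ℝ) / n) := by
        have e : (-(1 : ℝ) / n) * ((2 : ℕ) : ℝ) = -(2 : ℝ) / n := by push_cast; ring
        rw [ht_def, mul_pow, sq_abs, ← Real.rpow_natCast (Q.det ^ (-(1 : ℝ) / n)) 2,
          ← Real.rpow_mul hd.le, e]
      have h3 : t ^ (-(2 : ℝ)) = (t ^ 2)⁻¹ := by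
        rw [← Real.rpow_natCast t 2, ← Real.rpow_neg ht.le]
        norm_num
      rw [h1, h3, h2]
      have hdr : Q.det ^ (-(2 : ℝ) / n) ≠ 0 := (Real.rpow_pos_of_pos hd _).ne'
      field_simp
    refine ⟨t • Q, aux_posDef_smul hQ ht, ?_⟩
    rw [det_smul, Fintype.card_fin, Matrix.mul_smul, Matrix.smul_mul, hMQMT,
      smul_smul, smul_smul]
    congr 1
    rw [mul_assoc]
    exact key
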